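/- Let ε > 0, δ ≥ 0, and let N, κ be positive integers with κ ≤ N−1. Let q′₀, …, q′_{N−1} be nonnegative reals and q″₀, …, q″_{N−1} be reals such that |q′_i − q″_i| ≤ δ·q′₀ for all 0 ≤ i ≤ κ and |q′_i − q″_i| ≤ δ·q′_{i−κ} for all κ < i ≤ N−1. Define A′ = q′₀ + ∑_{i=1}^{N−1} ε·(1+ε)^{i−1}·q′_i and A″ = q″₀ + ∑_{i=1}^{N−1} ε·(1+ε)^{i−1}·q″_i. Then |A′ − A″| ≤ δ·(1+ε)^κ·A′. -/

import Mathlib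

open Finset

/-- If the reals `q'' i` approximate the nonnegative reals `q' i` in the sense that
`|q' i - q'' i| ≤ δ · q' 0` for `0 ≤ i ≤ κ` and `|q' i - q'' i| ≤ δ · q' (i - κ)` for
`κ < i ≤ N - 1`, then the corresponding geometric-bucket sums `A'` and `A''` satisfy
`|A' - A''| ≤ δ · (1+ε)^κ · A'`. -/
theorem bucket_sum_approximation (ε δ : ℝ) (hε : 0 < ε) (hδ : 0 ≤ δ)
    (N κ : ℕ) (hN : 0 < N) (hκpos : 0 < κ) (hκ : κ ≤ N - 1)
    (q' q'' : ℕ → ℝ) (hq' : ∀ i ≤ N - 1, 0 ≤ q' i)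
    (hlow : ∀ i ≤ κ, |q' i - q'' i| ≤ δ * q' 0)
    (hhigh : ∀ i, κ < i → i ≤ N - 1 → |q' i - q'' i| ≤ δ * q' (i - κ)) :
    |(q' 0 + ∑ i ∈ Icc 1 (N - 1), ε * (1 + ε) ^ (i - 1) * q' i)
        - (q'' 0 + ∑ i ∈ Icc 1 (N - 1), ε * (1 + ε) ^ (i - 1) * q'' i)|
      ≤ δ * (1 + ε) ^ κ * (q' 0 + ∑ i ∈ Icc 1 (N - 1), ε * (1 + ε) ^ (i - 1) * q' i) := by
  have h1ε : (0:ℝ) < 1 + ε := by linarith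
  have hq0 : 0 ≤ q' 0 := hq' 0 (Nat.zero_le _)
  set w : ℕ → ℝ := fun i => ε * (1 + ε) ^ (i - 1) with hw
  have hwnn : ∀ i, 0 ≤ w i := fun i => by positivity
  -- rewrite intervals: Icc 1 (N-1) = Ioc 0 (N-1)
  have hIcc : Icc 1 (N - 1) = Ioc 0 (N - 1) := Finset.Icc_succ_left_eq_Ioc 0 (N - 1)
  -- difference rearrangement
  have hfold : ∀ (a : ℕ) (b : ℝ), ε * (1 + ε) ^ (a - 1) * b = w a * b := fun _ _ => rfl
  simp only [hfold]
  have hdiff : (q' 0 + ∑ i ∈ Icc 1 (N-1), w i * q' i) - (q'' 0 + ∑ i ∈ Icc 1 (N-1), w i * q'' i)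
      = (q' 0 - q'' 0) + ∑ i ∈ Icc 1 (N-1), w i * (q' i - q'' i) := by
    have : ∑ i ∈ Icc 1 (N-1), w i * (q' i - q'' i)
        = ∑ i ∈ Icc 1 (N-1), w i * q' i - ∑ i ∈ Icc 1 (N-1), w i * q'' i := by
      rw [← Finset.sum_sub_distrib]
      exact Finset.sum_congr rfl fun i _ => mul_sub _ _ _
    rw [this]; ring
  rw [hdiff]
  -- triangle inequality
  have htri : |(q' 0 - q'' 0) + ∑ i ∈ Icc 1 (N-1), w i * (q' i - q'' i)|
      ≤ |q' 0 - q'' 0| + ∑ i ∈ Icc 1 (N-1), w i * |q' i - q'' i| := by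
    refine (abs_add_le _ _).trans (add_le_add_right ?_ _)
    refine (Finset.abs_sum_le_sum_abs _ _).trans (le_of_eq ?_)
    exact Finset.sum_congr rfl fun i _ => by rw [abs_mul, abs_of_nonneg (hwnn i)]
  refine htri.trans ?_
  -- split the sum
  rw [hIcc, ← Finset.sum_Ioc_consecutive (fun i => w i * |q' i - q'' i|) (Nat.zero_le κ) hκ]
  -- bound low part
  have hlowsum : ∑ i ∈ Ioc 0 κ, w i * |q' i - q'' i| ≤ (∑ i ∈ Ioc 0 κ, w i) * (δ * q' 0) := by
    rw [Finset.sum_mul]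
    refine Finset.sum_le_sum fun i hi => ?_
    exact mul_le_mul_of_nonneg_left (hlow i (mem_Ioc.mp hi).2) (hwnn i)
  -- geometric sum
  have hgeom : ∑ i ∈ Ioc 0 κ, w i = (1 + ε) ^ κ - 1 := by
    rw [show Ioc 0 κ = Icc (Nat.succ 0) κ from (Finset.Icc_succ_left_eq_Ioc 0 κ).symm, show Icc (Nat.succ 0) κ = Ico 1 (κ + 1) by rw [Nat.Icc_eq_range']; rw [Nat.Ico_eq_range'],
      Finset.sum_Ico_eq_sum_range]
    simp only [hw, Nat.add_sub_cancel]
    have : ∀ j, ε * (1 + ε) ^ (1 + j - 1) = ε * (1 + ε) ^ j := by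
      intro j; rw [show 1 + j - 1 = j from by omega]
    rw [Finset.sum_congr rfl fun j _ => this j, ← Finset.mul_sum,
      geom_sum_eq (by linarith : (1:ℝ) + ε ≠ 1)]
    rw [add_sub_cancel_left]; field_simp
  -- bound high part
  have hhighsum : ∑ i ∈ Ioc κ (N-1), w i * |q' i - q'' i|
      ≤ δ * (1 + ε) ^ κ * ∑ j ∈ Ioc 0 (N-1), w j * q' j := by
    have step1 : ∑ i ∈ Ioc κ (N-1), w i * |q' i - q'' i|
        ≤ ∑ i ∈ Ioc κ (N-1), δ * (1 + ε) ^ κ * (w (i - κ) * q' (i - κ)) := by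
      refine Finset.sum_le_sum fun i hi => ?_
      obtain ⟨hi1, hi2⟩ := mem_Ioc.mp hi
      have hwi : w i = (1 + ε) ^ κ * w (i - κ) := by
        simp only [hw]
        rw [show i - 1 = κ + (i - κ - 1) by omega, pow_add]
        ring
      calc w i * |q' i - q'' i| ≤ w i * (δ * q' (i - κ)) :=
            mul_le_mul_of_nonneg_left (hhigh i hi1 hi2) (hwnn i)
        _ = δ * (1 + ε) ^ κ * (w (i - κ) * q' (i - κ)) := by rw [hwi]; ring
    refine step1.trans ?_
    rw [← Finset.mul_sum]
    refine mul_le_mul_of_nonneg_left ?_ (by positivity)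
    -- reindex i ↦ i - κ
    have hre : ∑ i ∈ Ioc κ (N-1), w (i - κ) * q' (i - κ)
        = ∑ j ∈ Ioc 0 (N-1-κ), w j * q' j := by
      refine Finset.sum_nbij' (fun i => i - κ) (fun j => j + κ) ?_ ?_ ?_ ?_ ?_
      · intro i hi; simp only [mem_Ioc] at hi ⊢; omega
      · intro j hj; simp only [mem_Ioc] at hj ⊢; omega
      · intro i hi; simp only [mem_Ioc] at hi; omega
      · intro j hj; simp only [mem_Ioc] at hj; omega
      · intro i hi; rfl
    rw [hre]
    refine Finset.sum_le_sum_of_subset_of_nonneg ?_ fun j hj _ => ?_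
    · exact Finset.Ioc_subset_Ioc_right (by omega)
    · exact mul_nonneg (hwnn j) (hq' j (mem_Ioc.mp hj).2)
  have hsumnn : 0 ≤ ∑ j ∈ Ioc 0 (N-1), w j * q' j :=
    Finset.sum_nonneg fun j hj => mul_nonneg (hwnn j) (hq' j (mem_Ioc.mp hj).2)
  have h0 : |q' 0 - q'' 0| ≤ δ * q' 0 := hlow 0 (Nat.zero_le _)
  have : |q' 0 - q'' 0| + (∑ i ∈ Ioc 0 κ, w i * |q' i - q'' i|)
      ≤ δ * (1 + ε) ^ κ * q' 0 := by
    have := hlowsum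
    rw [hgeom] at this
    nlinarith [mul_nonneg hδ hq0]
  calc |q' 0 - q'' 0| + ((∑ i ∈ Ioc 0 κ, w i * |q' i - q'' i|)
        + ∑ i ∈ Ioc κ (N-1), w i * |q' i - q'' i|)
      ≤ δ * (1 + ε) ^ κ * q' 0 + δ * (1 + ε) ^ κ * ∑ j ∈ Ioc 0 (N-1), w j * q' j := by
        rw [← add_assoc]; exact add_le_add this hhighsum
    _ = δ * (1 + ε) ^ κ * (q' 0 + ∑ j ∈ Ioc 0 (N-1), w j * q' j) := by ring
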